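/- Let G be a finite simple graph with nonnegative edge weights x, such that every odd cycle of G has total weight at least 1, and suppose 0 ≤ x_e < δ ≤ 1 for every edge e of G. Then every odd cycle C in G contains a pair of vertices u, v on C satisfying d_x(u, v) > (1 − δ)/2. -/

import Mathlib

open SimpleGraph

/-- The weight of a walk: the sum of the weights of its edges, counted with multiplicity. -/
def walkWeight {V : Type*} {G : SimpleGraph V} (x : Sym2 V → ℝ) {u v : V}
    (p : G.Walk u v) : ℝ :=
  (p.edges.map x).sum

/-- The shortest-path distance between `u` and `v` induced by the edge weights `x`. -/
noncomputable def wdist {V : Type*} (G : SimpleGraph V) (x : Sym2 V → ℝ) (u v : V) : ℝ :=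
  sInf {r | ∃ p : G.Walk u v, walkWeight x p = r}

section Aux

variable {V : Type*} {G : SimpleGraph V} (x : Sym2 V → ℝ)

lemma walkWeight_nil {u : V} : walkWeight x (Walk.nil : G.Walk u u) = 0 := rfl

lemma walkWeight_cons {u v w : V} (h : G.Adj u v) (p : G.Walk v w) :
    walkWeight x (Walk.cons h p) = x s(u, v) + walkWeight x p := by
  simp [walkWeight]

lemma walkWeight_append {u v w : V} (p : G.Walk u v) (q : G.Walk v w) :
    walkWeight x (p.append q) = walkWeight x p + walkWeight x q := by
  simp [walkWeight, Walk.edges_append]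

lemma walkWeight_reverse {u v : V} (p : G.Walk u v) :
    walkWeight x p.reverse = walkWeight x p := by
  simp [walkWeight, Walk.edges_reverse, List.sum_reverse]

lemma walkWeight_copy {u v u' v' : V} (p : G.Walk u v) (hu : u = u') (hv : v = v') :
    walkWeight x (p.copy hu hv) = walkWeight x p := by
  simp [walkWeight, Walk.edges_copy]

lemma walkWeight_nonneg (hx : ∀ e ∈ G.edgeSet, 0 ≤ x e) {u v : V} (p : G.Walk u v) :
    0 ≤ walkWeight x p := by
  apply List.sum_nonneg
  intro r hr
  obtain ⟨e, he, rfl⟩ := List.mem_map.mp hr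
  exact hx e (p.edges_subset_edgeSet he)

/-- In a path, an edge incident to the first vertex must be the first edge. -/
lemma path_head_edge {a b c : V} (p : G.Walk a b) (hp : p.IsPath) (h : s(a, c) ∈ p.edges) :
    ∃ (h' : G.Adj a c) (r : G.Walk c b), p = Walk.cons h' r := by
  cases p with
  | nil => simp at h
  | cons h1 r =>
    rw [Walk.edges_cons, List.mem_cons] at h
    rcases h with h | h
    · rw [Sym2.eq_iff] at h
      rcases h with ⟨-, rfl⟩ | ⟨rfl, rfl⟩
      · exact ⟨h1, r, rfl⟩
      · exact absurd h1 G.irrefl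
    · rw [Walk.cons_isPath_iff] at hp
      exact absurd (r.fst_mem_support_of_mem_edges h) hp.2

/-- Every closed walk of odd length has weight at least 1, given that every odd cycle does. -/
lemma oddWalk_one (hx : ∀ e ∈ G.edgeSet, 0 ≤ x e)
    (hodd : ∀ (v : V) (C : G.Walk v v), C.IsCycle → Odd C.length → 1 ≤ walkWeight x C) :
    ∀ (n : ℕ) (u : V) (p : G.Walk u u), p.length ≤ n → Odd p.length → 1 ≤ walkWeight x p := by
  classical
  intro n
  induction n with
  | zero =>
    intro u p hl ho
    interval_cases h : p.length
    · simp at ho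
  | succ n ih =>
    intro u p hl ho
    by_cases hnd : p.support.tail.Nodup
    · -- p is a cycle (or has length 2, impossible for odd)
      cases p with
      | nil => simp at ho
      | @cons _ y _ h q =>
        have hq : q.IsPath := by
          apply Walk.IsPath.mk'
          simpa using hnd
        by_cases he : s(u, y) ∈ q.edges
        · exfalso
          rw [Sym2.eq_swap] at he
          obtain ⟨h', r, rfl⟩ := path_head_edge q hq he
          have : r = Walk.nil := Walk.isPath_iff_eq_nil.mp ((Walk.cons_isPath_iff _ _).mp hq).1
          subst this
          simp [Nat.odd_iff] at ho
        · exact hodd u _ ((Walk.cons_isCycle_iff q h).mpr ⟨hq, he⟩) ho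
    · -- split p into two shorter closed walks
      obtain ⟨w, hw2⟩ : ∃ w, 2 ≤ p.support.tail.count w := by
        by_contra hc
        push_neg at hc
        exact hnd (List.nodup_iff_count_le_one.mpr fun a => by have := hc a; omega)
      have hwsup : w ∈ p.support := by
        rw [Walk.support_eq_cons, List.mem_cons]
        right
        rw [← List.count_pos_iff]
        omega
      have hcnt_p : 2 ≤ p.support.count w := by
        rw [Walk.support_eq_cons, List.count_cons]
        omega
      have hspec := p.take_spec hwsup
      set t := p.takeUntil w hwsup with ht
      set d := p.dropUntil w hwsup with hd
      have hcnt_t : t.support.count w = 1 := p.count_support_takeUntil_eq_one hwsup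
      have hsupp : p.support = t.support ++ d.support.tail := by
        rw [← hspec, Walk.support_append]
      have hcnt_d : 1 ≤ d.support.tail.count w := by
        have := hcnt_p
        rw [hsupp, List.count_append] at this
        omega
      cases hde : d with
      | nil => rw [hde] at hcnt_d; simp at hcnt_d
      | @cons _ z _ h2 d' =>
        have hw3 : w ∈ d'.support := by
          rw [← List.count_pos_iff]
          rw [hde] at hcnt_d
          simpa using hcnt_d
        have hspec2 := d'.take_spec hw3
        set t2 := d'.takeUntil w hw3 with ht2
        set d2 := d'.dropUntil w hw3 with hd2
        have hcnt_t2 : t2.support.count w = 1 := d'.count_support_takeUntil_eq_one hw3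
        -- the two closed walks
        set c1 : G.Walk w w := Walk.cons h2 t2 with hc1
        set c2 : G.Walk w w := d2.append t with hc2
        have hlen : p.length = c1.length + c2.length := by
          have h1 := congrArg Walk.length hspec
          have h3 := congrArg Walk.length hspec2
          rw [Walk.length_append] at h1 h3
          rw [hde] at h1
          simp only [Walk.length_cons] at h1
          simp only [hc1, hc2, Walk.length_cons, Walk.length_append]
          omega
        have hwt : walkWeight x p = walkWeight x c1 + walkWeight x c2 := by
          have h1 : walkWeight x p = walkWeight x t + walkWeight x d := by
            rw [← hspec, walkWeight_append]
          have h3 : walkWeight x d' = walkWeight x t2 + walkWeight x d2 := by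
            rw [← hspec2, walkWeight_append]
          rw [hde, walkWeight_cons] at h1
          simp only [hc1, hc2, walkWeight_cons, walkWeight_append]
          rw [h1, h3]
          ring
        have hc1pos : 1 ≤ c1.length := by simp [hc1]
        have hc2pos : 1 ≤ c2.length := by
          by_cases huw : u = w
          · -- then d2 is not nil
            subst huw
            have htnil : t.support = [u] → t.support.count u = 1 := by intro h; simp [h]
            have hcnt_d2 : 1 ≤ d2.support.tail.count u := by
              have hsupp2 : d'.support = t2.support ++ d2.support.tail := by
                rw [← hspec2, Walk.support_append]
              have h5 : 2 ≤ d'.support.count u := by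
                have h6 : 2 ≤ d.support.tail.count u := by
                  have h7 : p.support.count u = p.support.tail.count u + 1 := by
                    rw [Walk.support_eq_cons, List.count_cons]
                    simp
                  have h8 := congrArg (List.count u) hsupp
                  rw [List.count_append] at h8
                  omega
                rw [hde] at h6
                simpa using h6
              rw [hsupp2, List.count_append] at h5
              omega
            have h8 : u ∈ d2.support.tail := by rw [← List.count_pos_iff]; omega
            have h9 := congrArg List.length (Walk.support_eq_cons d2)
            have h10 := d2.length_support
            have h11 : 1 ≤ d2.support.tail.length := List.length_pos_iff.mpr (List.ne_nil_of_mem h8)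
            simp only [List.length_cons] at h9
            simp only [hc2, Walk.length_append]
            omega
          · have : 1 ≤ t.length := by
              rcases Nat.eq_zero_or_pos t.length with h | h
              · exfalso
                have : t.Nil := Walk.nil_iff_length_eq.mpr h
                cases htt : t with
                | nil => exact huw rfl
                | cons _ _ => rw [htt] at h; simp at h
              · exact h
            simp only [hc2, Walk.length_append]
            omega
        have hnn1 : 0 ≤ walkWeight x c1 := walkWeight_nonneg x hx c1
        have hnn2 : 0 ≤ walkWeight x c2 := walkWeight_nonneg x hx c2
        rcases Nat.even_or_odd c1.length with hev | hod
        · have hodd2 : Odd c2.length := by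
            rw [hlen] at ho
            rcases Nat.even_or_odd c2.length with h | h
            · exact absurd ho (by simp [Nat.even_add.mpr, parity_simps, hev, h])
            · exact h
          have := ih w c2 (by omega) hodd2
          linarith
        · have := ih w c1 (by omega) hod
          linarith

end Aux

/-- If every odd cycle has total weight at least 1 and `0 ≤ x_e < δ ≤ 1` for every edge,
then every odd cycle contains a pair of vertices at distance greater than `(1 - δ)/2`. -/
theorem stmt0 {V : Type*} [Fintype V] (G : SimpleGraph V) (x : Sym2 V → ℝ) (δ : ℝ)
    (hδ : δ ≤ 1)
    (hx : ∀ e ∈ G.edgeSet, 0 ≤ x e ∧ x e < δ)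
    (hodd : ∀ (v : V) (C : G.Walk v v), C.IsCycle → Odd C.length → 1 ≤ walkWeight x C)
    (v : V) (C : G.Walk v v) (hC : C.IsCycle) (hCodd : Odd C.length) :
    ∃ a ∈ C.support, ∃ b ∈ C.support, (1 - δ) / 2 < wdist G x a b := by
  classical
  by_contra hcon
  push_neg at hcon
  set c : ℝ := (1 - δ) / 2 with hc
  have hx0 : ∀ e ∈ G.edgeSet, 0 ≤ x e := fun e he => (hx e he).1
  have key := oddWalk_one x hx0 hodd
  have hlenpos : 0 < C.length := by have := hC.three_le_length; omega
  have he0 : s(v, C.getVert 1) ∈ G.edgeSet := by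
    have h := C.adj_getVert_succ hlenpos
    rw [C.getVert_zero] at h
    exact (G.mem_edgeSet).mpr h
  have hfin : (x '' G.edgeSet).Finite := (Set.toFinite _).image x
  have hne : (x '' G.edgeSet).Nonempty := ⟨_, _, he0, rfl⟩
  set M := sSup (x '' G.edgeSet) with hM
  obtain ⟨e0, he0', hMe⟩ := hne.csSup_mem hfin
  have hM0 : 0 ≤ M := by rw [hM, ← hMe]; exact (hx e0 he0').1
  have hMδ : M < δ := by rw [hM, ← hMe]; exact (hx e0 he0').2
  have hMle : ∀ e ∈ G.edgeSet, x e ≤ M := fun e he => le_csSup (hfin.bddAbove) ⟨e, he, rfl⟩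
  set ε : ℝ := (δ - M) / 4 with hε
  have hεpos : 0 < ε := by rw [hε]; linarith
  have hc0 : 0 ≤ c := by rw [hc]; linarith
  have light : ∀ b ∈ C.support, ∃ Q : G.Walk v b, walkWeight x Q < c + ε := by
    intro b hb
    have hSne : {r | ∃ p : G.Walk v b, walkWeight x p = r}.Nonempty := ⟨_, C.takeUntil b hb, rfl⟩
    have hle : wdist G x v b ≤ c := hcon v C.start_mem_support b hb
    have hlt : sInf {r | ∃ p : G.Walk v b, walkWeight x p = r} < c + ε :=
      lt_of_le_of_lt hle (by linarith)
    obtain ⟨r, ⟨Q, hQ⟩, hr⟩ := exists_lt_of_csInf_lt hSne hlt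
    exact ⟨Q, by rw [hQ]; exact hr⟩
  have main : ∀ k, k ≤ C.length →
      ∃ Q : G.Walk v (C.getVert k), walkWeight x Q < c + ε ∧ Q.length % 2 = k % 2 := by
    intro k
    induction k with
    | zero =>
      intro _
      refine ⟨Walk.nil.copy rfl (C.getVert_zero).symm, ?_, ?_⟩
      · rw [walkWeight_copy, walkWeight_nil]; linarith
      · simp
    | succ k ih =>
      intro hk1
      obtain ⟨Q, hQw, hQp⟩ := ih (by omega)
      have hb : C.getVert (k + 1) ∈ C.support :=
        Walk.mem_support_iff_exists_getVert.mpr ⟨k + 1, rfl, hk1⟩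
      obtain ⟨R, hRw⟩ := light _ hb
      have hadj : G.Adj (C.getVert k) (C.getVert (k + 1)) := C.adj_getVert_succ (by omega)
      refine ⟨R, hRw, ?_⟩
      by_contra hpar
      have hpar2 : R.length % 2 = k % 2 := by omega
      set W : G.Walk v v := Q.append (Walk.cons hadj R.reverse) with hW
      have hWodd : Odd W.length := by
        rw [hW, Nat.odd_iff]
        simp only [Walk.length_append, Walk.length_cons, Walk.length_reverse]
        omega
      have hWw : walkWeight x W
          = walkWeight x Q + x s(C.getVert k, C.getVert (k + 1)) + walkWeight x R := by
        rw [hW, walkWeight_append, walkWeight_cons, walkWeight_reverse]; ring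
      have hkey := key W.length v W le_rfl hWodd
      have hxe := hMle _ ((G.mem_edgeSet).mpr hadj)
      rw [hWw] at hkey
      have : c + ε + M + (c + ε) < 1 := by rw [hc, hε]; linarith
      linarith
  obtain ⟨Q, hQw, hQp⟩ := main C.length le_rfl
  set Q2 : G.Walk v v := Q.copy rfl C.getVert_length with hQ2
  have hQ2odd : Odd Q2.length := by
    rw [hQ2, Nat.odd_iff, Walk.length_copy]
    rw [Nat.odd_iff] at hCodd
    omega
  have hkey := key Q2.length v Q2 le_rfl hQ2odd
  rw [hQ2, walkWeight_copy] at hkey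
  have hlt1 : c + ε < 1 := by rw [hc, hε]; linarith
  linarith
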